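/- Let v : 2^M → ℝ≥0 be a monotone α-submodular valuation (α ≥ 1) that is ε-close to a linear valuation ℓ, and let 𝓜 be a matroid on ground set M. Let S = {s_1, …, s_k} be a basis of 𝓜 built greedily: for each j, writing S_j := {s_1,…,s_{j−1}}, the set S_j ∪ {s_j} is independent and v(s_j | S_j) ≥ v(j' | S_j) for every item j' ∉ S_j such that S_j ∪ {j'} is independent. Then for every independent set I of 𝓜, v(S) ≥ ((1−3ε)/α)·v(I). -/

import Mathlib

/-- The prefix `{s_1, …, s_{j-1}}` of a finite sequence `s : Fin k → M`. -/
def prefixSet {M : Type*} [DecidableEq M] {k : ℕ} (s : Fin k → M) (j : Fin k) :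
    Finset M :=
  (Finset.univ.filter (fun i : Fin k => i < j)).image s

private lemma filter_lt_succ {N : ℕ} (n : ℕ) (h : n < N) :
    (Finset.univ.filter (fun i : Fin N => (i : ℕ) < n + 1)) =
      insert ⟨n, h⟩ (Finset.univ.filter (fun i : Fin N => (i : ℕ) < n)) := by
  ext i
  simp only [Finset.mem_filter, Finset.mem_univ, true_and, Finset.mem_insert, Fin.ext_iff]
  omega

private lemma filter_lt_card {N : ℕ} (n : ℕ) (h : n ≤ N) :
    (Finset.univ.filter (fun i : Fin N => (i : ℕ) < n)).card = n := by
  induction n with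
  | zero => simp
  | succ m ih =>
    rw [filter_lt_succ m (by omega), Finset.card_insert_of_notMem (by simp),
      ih (by omega)]

set_option maxRecDepth 8000 in
/-- Theorem: greedy for `α`-submodular, `ε`-close-to-linear
valuations over a matroid.  Let `v` be a monotone `α`-submodular valuation
(`α ≥ 1`) that is `ε`-close to a linear valuation `ℓ`, and let `Indep` be the
independent sets of a matroid on `M`.  If `S = {s_1,…,s_k}` is a basis built
greedily (each `s_j` preserves independence and has maximum marginal value among
items preserving independence, and `S` is maximal independent), then
`v(S) ≥ ((1−3ε)/α)·v(I)` for every independent set `I`. -/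
theorem greedy_close_to_linear
    {M : Type*} [Fintype M] [DecidableEq M]
    (α ε : ℝ) (hα : 1 ≤ α) (hε : 0 ≤ ε)
    (v : Finset M → ℝ)
    (hv : ∀ S : Finset M, 0 ≤ v S)
    (hmono : ∀ S T : Finset M, S ⊆ T → v S ≤ v T)
    (hsub : ∀ S T : Finset M, S ⊆ T → ∀ j : M, j ∉ T →
      α * (v (insert j S) - v S) ≥ v (insert j T) - v T)
    (c : ℝ) (hc : 0 ≤ c) (l : M → ℝ) (hl : ∀ j : M, 0 ≤ l j)
    (ℓ : Finset M → ℝ) (hℓ : ∀ S : Finset M, ℓ S = c + ∑ j ∈ S, l j)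
    (hclose : ∀ S : Finset M, ℓ S ≤ v S ∧ v S ≤ (1 + ε) * ℓ S)
    -- the matroid, given by its independent sets
    (Indep : Finset M → Prop)
    (hIempty : Indep ∅)
    (hIdown : ∀ S T : Finset M, S ⊆ T → Indep T → Indep S)
    (hIexch : ∀ S T : Finset M, Indep S → Indep T → S.card < T.card →
      ∃ t ∈ T, t ∉ S ∧ Indep (insert t S))
    -- the greedily built set S = {s_1, …, s_k}
    (k : ℕ) (s : Fin k → M) (hsinj : Function.Injective s)
    (S : Finset M) (hS : S = Finset.univ.image s)
    (hgIndep : ∀ j : Fin k, Indep (insert (s j) (prefixSet s j)))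
    (hgMax : ∀ j : Fin k, ∀ j' : M, j' ∉ prefixSet s j →
      Indep (insert j' (prefixSet s j)) →
      v (insert (s j) (prefixSet s j)) - v (prefixSet s j) ≥
        v (insert j' (prefixSet s j)) - v (prefixSet s j))
    (hSmax : ∀ j : M, j ∉ S → ¬ Indep (insert j S))
    -- any independent set I
    (I : Finset M) (hI : Indep I) :
    v S ≥ ((1 - 3 * ε) / α) * v I := by
  classical
  have hα0 : (0:ℝ) < α := lt_of_lt_of_le one_pos hα
  set Q : ℕ → Finset M := fun n =>
    (Finset.univ.filter (fun i : Fin k => (i : ℕ) < n)).image s with hQdef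
  have hPQ : ∀ j : Fin k, prefixSet s j = Q (j : ℕ) := by
    intro j
    simp only [hQdef, prefixSet]
    congr 1
  have hQ0 : Q 0 = ∅ := by simp [hQdef]
  have hQk : Q k = S := by
    rw [hS]
    simp only [hQdef]
    rw [Finset.filter_true_of_mem (fun i _ => i.isLt)]
  have hQsucc : ∀ n (h : n < k), Q (n + 1) = insert (s ⟨n, h⟩) (Q n) := by
    intro n h
    simp only [hQdef]
    rw [filter_lt_succ n h, Finset.image_insert]
  have hQmono : ∀ a b : ℕ, a ≤ b → Q a ⊆ Q b := by
    intro a b hab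
    apply Finset.image_subset_image
    intro i hi
    simp only [Finset.mem_filter, Finset.mem_univ, true_and] at hi ⊢
    omega
  have hQcard : ∀ n, n ≤ k → (Q n).card = n := by
    intro n hn
    rw [hQdef]
    simp only
    rw [Finset.card_image_of_injective _ hsinj, filter_lt_card n hn]
  have hQindep : ∀ n, n ≤ k → Indep (Q n) := by
    intro n
    induction n with
    | zero => intro _; rw [hQ0]; exact hIempty
    | succ m ih =>
      intro h
      rw [hQsucc m (by omega)]
      have h2 := hgIndep ⟨m, by omega⟩
      rwa [hPQ ⟨m, by omega⟩] at h2
  have hSindep : Indep S := by rw [← hQk]; exact hQindep k le_rfl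
  have hScard : S.card = k := by rw [← hQk]; exact hQcard k le_rfl
  have hIk : I.card ≤ k := by
    by_contra hcon
    obtain ⟨t, htI, htS, hind⟩ := hIexch S I hSindep hI (by omega)
    exact hSmax t htS hind
  -- marginal values of the greedy steps
  set marg : Fin k → ℝ := fun j => v (insert (s j) (Q (j : ℕ))) - v (Q (j : ℕ))
    with hmargdef
  have hmarg0 : ∀ j, 0 ≤ marg j := by
    intro j
    have := hmono (Q (j : ℕ)) (insert (s j) (Q (j : ℕ))) (Finset.subset_insert _ _)
    simp only [hmargdef]
    linarith
  have hsum_marg : ∑ j : Fin k, marg j = v S - v (∅ : Finset M) := by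
    have h1 : ∀ j : Fin k, marg j = v (Q ((j : ℕ) + 1)) - v (Q (j : ℕ)) := by
      intro j
      simp only [hmargdef]
      rw [hQsucc (j : ℕ) j.isLt, Fin.eta]
    calc ∑ j : Fin k, marg j
        = ∑ j : Fin k, (v (Q ((j : ℕ) + 1)) - v (Q (j : ℕ))) :=
          Finset.sum_congr rfl (fun j _ => h1 j)
      _ = ∑ n ∈ Finset.range k, (v (Q (n + 1)) - v (Q n)) :=
          Fin.sum_univ_eq_sum_range (fun n => v (Q (n + 1)) - v (Q n)) k
      _ = v (Q k) - v (Q 0) := Finset.sum_range_sub (fun n => v (Q n)) k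
      _ = v S - v (∅ : Finset M) := by rw [hQk, hQ0]
  -- availability sets
  set avail : M → Finset (Fin k) := fun w =>
    Finset.univ.filter (fun j => w ∉ Q (j : ℕ) ∧ Indep (insert w (Q (j : ℕ))) ∧
      ∀ j₂ : Fin k, s j₂ = w → j ≤ j₂) with havaildef
  -- Hall's condition
  have hhall : ∀ U : Finset {x // x ∈ I},
      U.card ≤ (U.biUnion (fun x => avail (x : M))).card := by
    intro U
    set B := U.biUnion (fun x => avail (x : M)) with hB
    by_cases hBuniv : B = Finset.univ
    · calc U.card ≤ Fintype.card {x // x ∈ I} := Finset.card_le_univ U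
        _ = I.card := Fintype.card_coe I
        _ ≤ k := hIk
        _ = B.card := by rw [hBuniv, Finset.card_univ, Fintype.card_fin]
    · have hne : (Finset.univ \ B).Nonempty := by
        rw [Finset.sdiff_nonempty]
        intro hsub'
        exact hBuniv (Finset.univ_subset_iff.mp hsub')
      set j₀ := (Finset.univ \ B).min' hne with hj₀
      have hj₀nB : j₀ ∉ B := by
        have h := Finset.min'_mem _ hne
        rw [Finset.mem_sdiff] at h
        exact h.2
      have hltB : ∀ j : Fin k, j < j₀ → j ∈ B := by
        intro j hj
        by_contra hjB
        have : j₀ ≤ j := Finset.min'_le _ _ (Finset.mem_sdiff.mpr ⟨Finset.mem_univ _, hjB⟩)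
        exact absurd hj (not_lt.mpr this)
      have hfilB : (Finset.univ.filter (fun j : Fin k => j < j₀)) ⊆ B :=
        fun j hj => hltB j (Finset.mem_filter.mp hj).2
      have hcardfil : (Finset.univ.filter (fun j : Fin k => j < j₀)).card = (j₀ : ℕ) := by
        have heq : (Finset.univ.filter (fun j : Fin k => j < j₀)) =
            (Finset.univ.filter (fun j : Fin k => (j : ℕ) < (j₀ : ℕ))) := by
          apply Finset.filter_congr
          intro j _
          exact Iff.rfl
        rw [heq, filter_lt_card _ (le_of_lt j₀.isLt)]
      have hUj : U.card ≤ (j₀ : ℕ) := by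
        by_contra hcon
        push_neg at hcon
        have hXI : U.image (Subtype.val) ⊆ I := by
          intro x hx
          obtain ⟨w, _, rfl⟩ := Finset.mem_image.mp hx
          exact w.2
        have hXcard : (U.image Subtype.val).card = U.card :=
          Finset.card_image_of_injective _ Subtype.val_injective
        obtain ⟨t, htX, htQ, htind⟩ := hIexch (Q (j₀ : ℕ)) (U.image Subtype.val)
          (hQindep _ (le_of_lt j₀.isLt)) (hIdown _ _ hXI hI)
          (by rw [hXcard, hQcard _ (le_of_lt j₀.isLt)]; exact hcon)
        obtain ⟨w, hwU, hwt⟩ := Finset.mem_image.mp htX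
        subst hwt
        have hj₀av : j₀ ∉ avail (w : M) := fun h =>
          hj₀nB (Finset.mem_biUnion.mpr ⟨w, hwU, h⟩)
        have h3 : ¬ (∀ j₂ : Fin k, s j₂ = (w : M) → j₀ ≤ j₂) := by
          intro h3
          apply hj₀av
          simp only [havaildef, Finset.mem_filter, Finset.mem_univ, true_and]
          exact ⟨htQ, htind, h3⟩
        push_neg at h3
        obtain ⟨j₂, hj₂t, hj₂lt⟩ := h3
        apply htQ
        simp only [hQdef]
        exact Finset.mem_image.mpr ⟨j₂, Finset.mem_filter.mpr
          ⟨Finset.mem_univ _, by exact_mod_cast hj₂lt⟩, hj₂t⟩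
      calc U.card ≤ (j₀ : ℕ) := hUj
        _ = (Finset.univ.filter (fun j : Fin k => j < j₀)).card := hcardfil.symm
        _ ≤ B.card := Finset.card_le_card hfilB
  obtain ⟨f, hfinj, hfav⟩ :=
    (Finset.all_card_le_biUnion_card_iff_exists_injective
      (fun x : {x // x ∈ I} => avail (x : M))).mp hhall
  rcases I.eq_empty_or_nonempty with hIe | hIne
  · subst hIe
    have h1 : v (∅ : Finset M) ≤ v S := hmono _ _ (Finset.empty_subset S)
    rcases le_or_gt (1 - 3 * ε) 0 with h3 | h3
    · have h4 : ((1 - 3 * ε) / α) * v (∅ : Finset M) ≤ 0 :=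
        mul_nonpos_of_nonpos_of_nonneg (div_nonpos_iff.mpr (Or.inr ⟨h3, le_of_lt hα0⟩)) (hv _)
      exact le_trans h4 (hv S)
    · have hdiv : (1 - 3 * ε) / α ≤ 1 := by
        rw [div_le_one hα0]; linarith
      have h4 : ((1 - 3 * ε) / α) * v (∅ : Finset M) ≤ 1 * v (∅ : Finset M) :=
        mul_le_mul_of_nonneg_right hdiv (hv _)
      rw [one_mul] at h4
      exact le_trans h4 h1
  · haveI : Nonempty {x // x ∈ I} := ⟨⟨hIne.choose, hIne.choose_spec⟩⟩
    set J := Finset.univ.image f with hJdef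
    have hJcard : J.card = I.card := by
      rw [hJdef, Finset.card_image_of_injective _ hfinj, Finset.card_univ,
        Fintype.card_coe]
    set σ := J.orderIsoOfFin hJcard with hσdef
    set g := Function.invFun f with hgdef
    have hfg : ∀ j ∈ J, f (g j) = j := by
      intro j hj
      obtain ⟨a, _, rfl⟩ := Finset.mem_image.mp hj
      rw [hgdef]
      exact congrArg f (Function.leftInverse_invFun hfinj a)
    set e : Fin I.card → M := fun n => ((g ((σ n : Fin k))) : M) with hedef
    have hσJ : ∀ n, ((σ n : Fin k)) ∈ J := fun n => (σ n).2
    have hfge : ∀ n, f (g (σ n : Fin k)) = (σ n : Fin k) := fun n => hfg _ (hσJ n)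
    have heI : ∀ n, e n ∈ I := fun n => (g (σ n : Fin k)).2
    have heinj : Function.Injective e := by
      intro a b hab
      have h1 : g (σ a : Fin k) = g (σ b : Fin k) := Subtype.ext hab
      have h2 : ((σ a : Fin k)) = ((σ b : Fin k)) := by
        rw [← hfge a, ← hfge b, h1]
      exact σ.injective (Subtype.ext h2)
    have havail_e : ∀ n, ((σ n : Fin k)) ∈ avail (e n) := by
      intro n
      have h := hfav (g (σ n : Fin k))
      rwa [hfge n] at h
    set W : ℕ → Finset M := fun n =>
      (S \ I) ∪ (Finset.univ.filter (fun i : Fin I.card => (i : ℕ) < n)).image e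
      with hWdef
    have hW0 : W 0 = S \ I := by simp [hWdef]
    have hWsucc : ∀ n (h : n < I.card), W (n + 1) = insert (e ⟨n, h⟩) (W n) := by
      intro n h
      simp only [hWdef]
      rw [filter_lt_succ n h, Finset.image_insert, Finset.union_insert]
    have himage_e : Finset.univ.image e = I := by
      apply Finset.eq_of_subset_of_card_le
      · intro x hx
        obtain ⟨n, _, rfl⟩ := Finset.mem_image.mp hx
        exact heI n
      · rw [Finset.card_image_of_injective _ heinj, Finset.card_univ, Fintype.card_fin]
    have hWI : W I.card = S ∪ I := by
      simp only [hWdef]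
      rw [Finset.filter_true_of_mem (fun i _ => i.isLt), himage_e,
        Finset.sdiff_union_self_eq_union]
    have hQsubW : ∀ n : Fin I.card, Q ((σ n : Fin k) : ℕ) ⊆ W (n : ℕ) := by
      intro n x hx
      simp only [hQdef, Finset.mem_image, Finset.mem_filter, Finset.mem_univ,
        true_and] at hx
      obtain ⟨j', hj', rfl⟩ := hx
      by_cases hxI : s j' ∈ I
      · have hcap : (f ⟨s j', hxI⟩) ≤ j' := by
          have hmem := hfav ⟨s j', hxI⟩
          simp only [havaildef, Finset.mem_filter, Finset.mem_univ, true_and] at hmem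
          exact hmem.2.2 j' rfl
        have hfJ : f ⟨s j', hxI⟩ ∈ J := by
          rw [hJdef]; exact Finset.mem_image_of_mem f (Finset.mem_univ _)
        set a := σ.symm ⟨f ⟨s j', hxI⟩, hfJ⟩ with hadef
        have hσa : σ a = ⟨f ⟨s j', hxI⟩, hfJ⟩ := σ.apply_symm_apply _
        have haltn : a < n := by
          rw [← σ.lt_iff_lt, hσa]
          have h1 : (f ⟨s j', hxI⟩ : Fin k) < (σ n : Fin k) :=
            lt_of_le_of_lt hcap (by exact_mod_cast hj')
          exact_mod_cast h1
        have hea : e a = s j' := by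
          have h1 : g ((σ a : Fin k)) = ⟨s j', hxI⟩ := by
            rw [hσa, hgdef]
            exact Function.leftInverse_invFun hfinj _
          simp only [hedef]
          rw [h1]
        refine Finset.mem_union_right _ (Finset.mem_image.mpr
          ⟨a, Finset.mem_filter.mpr ⟨Finset.mem_univ _, by exact_mod_cast haltn⟩, hea⟩)
      · refine Finset.mem_union_left _ (Finset.mem_sdiff.mpr ⟨?_, hxI⟩)
        rw [hS]
        exact Finset.mem_image_of_mem s (Finset.mem_univ _)
    have henW : ∀ n : Fin I.card, e n ∉ W (n : ℕ) := by
      intro n hmem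
      rcases Finset.mem_union.mp hmem with h | h
      · exact (Finset.mem_sdiff.mp h).2 (heI n)
      · obtain ⟨i, hi, hie⟩ := Finset.mem_image.mp h
        have h2 : i = n := heinj hie
        rw [h2] at hi
        simp only [Finset.mem_filter, Finset.mem_univ, true_and] at hi
        omega
    have hstep : ∀ n : Fin I.card,
        v (W ((n : ℕ) + 1)) - v (W (n : ℕ)) ≤ α * marg ((σ n : Fin k)) := by
      intro n
      have hav := havail_e n
      simp only [havaildef, Finset.mem_filter, Finset.mem_univ, true_and] at hav
      obtain ⟨hnotin, hind, _⟩ := hav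
      have hgm : v (insert (e n) (Q ((σ n : Fin k) : ℕ))) - v (Q ((σ n : Fin k) : ℕ)) ≤
          marg ((σ n : Fin k)) := by
        have h := hgMax ((σ n : Fin k)) (e n) (by rwa [hPQ]) (by rwa [hPQ])
        rw [hPQ] at h
        simp only [hmargdef]
        linarith
      have hsb := hsub (Q ((σ n : Fin k) : ℕ)) (W (n : ℕ)) (hQsubW n) (e n) (henW n)
      rw [hWsucc (n : ℕ) n.isLt, Fin.eta]
      have halpha : (0:ℝ) ≤ α := by linarith
      calc v (insert (e n) (W (n : ℕ))) - v (W (n : ℕ))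
          ≤ α * (v (insert (e n) (Q ((σ n : Fin k) : ℕ))) - v (Q ((σ n : Fin k) : ℕ))) := hsb
        _ ≤ α * marg ((σ n : Fin k)) := mul_le_mul_of_nonneg_left hgm halpha
    have hsum1 : v (S ∪ I) - v (S \ I) ≤ α * (v S - v (∅ : Finset M)) := by
      have h1 : v (S ∪ I) - v (S \ I) =
          ∑ n ∈ Finset.range I.card, (v (W (n + 1)) - v (W n)) := by
        rw [Finset.sum_range_sub (fun n => v (W n)) I.card, hWI, hW0]
      have h2 : ∑ n ∈ Finset.range I.card, (v (W (n + 1)) - v (W n)) =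
          ∑ n : Fin I.card, (v (W ((n : ℕ) + 1)) - v (W (n : ℕ))) :=
        (Fin.sum_univ_eq_sum_range (fun n => v (W (n + 1)) - v (W n)) I.card).symm
      have h3 : ∑ n : Fin I.card, (v (W ((n : ℕ) + 1)) - v (W (n : ℕ))) ≤
          ∑ n : Fin I.card, α * marg ((σ n : Fin k)) :=
        Finset.sum_le_sum (fun n _ => hstep n)
      have h5 : ∑ n : Fin I.card, marg ((σ n : Fin k)) = ∑ x ∈ J, marg x := by
        rw [← Finset.sum_coe_sort J marg,
          ← Equiv.sum_comp σ.toEquiv (fun x : {x // x ∈ J} => marg (x : Fin k))]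
        rfl
      have h6 : ∑ x ∈ J, marg x ≤ ∑ x : Fin k, marg x :=
        Finset.sum_le_sum_of_subset_of_nonneg (Finset.subset_univ J)
          (fun x _ _ => hmarg0 x)
      have h7 : (0:ℝ) ≤ α := by linarith
      have h8 : ∑ n : Fin I.card, α * marg ((σ n : Fin k)) ≤ α * (v S - v (∅ : Finset M)) := by
        rw [← Finset.mul_sum, h5]
        apply mul_le_mul_of_nonneg_left _ h7
        rw [← hsum_marg]
        exact h6
      linarith [h3, h8, h1.le, h1.ge]
    have hlS : c + ∑ j ∈ S, l j ≤ v S := by rw [← hℓ]; exact (hclose S).1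
    have hlSI : c + ∑ j ∈ S ∪ I, l j ≤ v (S ∪ I) := by
      rw [← hℓ]; exact (hclose (S ∪ I)).1
    have hlSc : v (S \ I) ≤ (1 + ε) * (c + ∑ j ∈ S \ I, l j) := by
      rw [← hℓ]; exact (hclose (S \ I)).2
    have hlI : v I ≤ (1 + ε) * (c + ∑ j ∈ I, l j) := by
      rw [← hℓ]; exact (hclose I).2
    have hl0 : c ≤ v (∅ : Finset M) := by
      have h := (hclose ∅).1
      rw [hℓ] at h
      simpa using h
    have hsplit : ∑ j ∈ S ∪ I, l j = ∑ j ∈ S \ I, l j + ∑ j ∈ I, l j := by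
      rw [← Finset.sdiff_union_self_eq_union, Finset.sum_union Finset.sdiff_disjoint]
    have hsubsums : ∑ j ∈ S \ I, l j ≤ ∑ j ∈ S, l j :=
      Finset.sum_le_sum_of_subset_of_nonneg Finset.sdiff_subset (fun j _ _ => hl j)
    have hsumInn : 0 ≤ ∑ j ∈ I, l j := Finset.sum_nonneg (fun j _ => hl j)
    have hv0S : v (∅ : Finset M) ≤ v S := hmono _ _ (Finset.empty_subset S)
    have hαv0 : α * c ≤ α * v (∅ : Finset M) :=
      mul_le_mul_of_nonneg_left hl0 (by linarith)
    have hεX : ε * (∑ j ∈ S \ I, l j) ≤ ε * (v S - c) :=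
      mul_le_mul_of_nonneg_left (by linarith) hε
    have hexp1 : (1 + ε) * (c + ∑ j ∈ S \ I, l j)
        = c + (∑ j ∈ S \ I, l j) + ε * c + ε * (∑ j ∈ S \ I, l j) := by ring
    have hexp2 : α * (v S - v (∅ : Finset M)) = α * v S - α * v (∅ : Finset M) := by
      ring
    have hexp3 : ε * (v S - c) = ε * v S - ε * c := by ring
    have hexp4 : (α + ε) * v S = α * v S + ε * v S := by ring
    have hkey : α * c + ∑ j ∈ I, l j ≤ α * v S + ε * v S := by
      linarith [hsum1, hlSI, hlSc, hsplit, hexp1, hexp2, hexp3, hαv0, hεX]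
    have hαc : c ≤ α * c := by nlinarith
    have hfin : v I ≤ (1 + ε) * ((α + ε) * v S) := by
      have h9 : c + ∑ j ∈ I, l j ≤ (α + ε) * v S := by
        linarith [hkey, hαc, hexp4]
      calc v I ≤ (1 + ε) * (c + ∑ j ∈ I, l j) := hlI
        _ ≤ (1 + ε) * ((α + ε) * v S) := mul_le_mul_of_nonneg_left h9 (by linarith)
    rw [ge_iff_le, div_mul_eq_mul_div, div_le_iff₀ hα0]
    rcases le_or_gt (1 - 3 * ε) 0 with h3 | h3
    · have h4 : (1 - 3 * ε) * v I ≤ 0 := mul_nonpos_of_nonpos_of_nonneg h3 (hv I)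
      exact le_trans h4 (mul_nonneg (hv S) (le_of_lt hα0))
    · have hkey2 : (1 - 3 * ε) * ((1 + ε) * (α + ε)) ≤ α := by
        nlinarith [mul_nonneg hε (sub_nonneg.mpr hα),
          mul_nonneg (mul_nonneg hε hε) (le_trans zero_le_one hα),
          mul_nonneg (mul_nonneg hε hε) hε, mul_nonneg hε hε]
      calc (1 - 3 * ε) * v I ≤ (1 - 3 * ε) * ((1 + ε) * ((α + ε) * v S)) :=
            mul_le_mul_of_nonneg_left hfin (le_of_lt h3)
        _ = ((1 - 3 * ε) * ((1 + ε) * (α + ε))) * v S := by ring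
        _ ≤ α * v S := mul_le_mul_of_nonneg_right hkey2 (hv S)
        _ = v S * α := mul_comm _ _
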